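/- For any pure two-qubit state, the maximum win probability of the Bell-distinguishing game equals ½(1 + C(|ψ⟩)): i.e. max over 2×2 unitaries U,V of ½(√(⟨ψ|Π_A⁺Π_B⁺|ψ⟩) + √(⟨ψ|Π_A⁻Π_B⁻|ψ⟩))², with Π^± = (𝟙±(U+U†)/2)/2 acting locally, equals ½(1 + 2√(λ₀λ₁)) where λ₀, λ₁ are the Schmidt coefficients of |ψ⟩. -/

import Mathlib

open Matrix Kronecker ComplexConjugate

/-- The BD-game win probability ½(√⟨Π_A⁺Π_B⁺⟩ + √⟨Π_A⁻Π_B⁻⟩)² for local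
unitaries U, V, where Π^± = (𝟙 ± (U+U†)/2)/2 act locally. -/
noncomputable def bdWinProb (ψ : Fin 2 × Fin 2 → ℂ)
    (U V : Matrix (Fin 2) (Fin 2) ℂ) : ℝ :=
  let A : Matrix (Fin 2) (Fin 2) ℂ := (2 : ℂ)⁻¹ • (U + Uᴴ)
  let B : Matrix (Fin 2) (Fin 2) ℂ := (2 : ℂ)⁻¹ • (V + Vᴴ)
  let PiAp := ((2 : ℂ)⁻¹ • (1 + A)) ⊗ₖ (1 : Matrix (Fin 2) (Fin 2) ℂ)
  let PiAm := ((2 : ℂ)⁻¹ • (1 - A)) ⊗ₖ (1 : Matrix (Fin 2) (Fin 2) ℂ)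
  let PiBp := (1 : Matrix (Fin 2) (Fin 2) ℂ) ⊗ₖ ((2 : ℂ)⁻¹ • (1 + B))
  let PiBm := (1 : Matrix (Fin 2) (Fin 2) ℂ) ⊗ₖ ((2 : ℂ)⁻¹ • (1 - B))
  (1/2) * (Real.sqrt ((star ψ ⬝ᵥ ((PiAp * PiBp) *ᵥ ψ)).re) +
           Real.sqrt ((star ψ ⬝ᵥ ((PiAm * PiBm) *ᵥ ψ)).re)) ^ 2

/-! ### Auxiliary lemmas -/

lemma kron_dot (P Q : Matrix (Fin 2) (Fin 2) ℂ) (e f e' f' : Fin 2 → ℂ) :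
    star (fun p : Fin 2 × Fin 2 => e p.1 * f p.2) ⬝ᵥ
      ((P ⊗ₖ Q) *ᵥ fun p : Fin 2 × Fin 2 => e' p.1 * f' p.2)
    = (star e ⬝ᵥ (P *ᵥ e')) * (star f ⬝ᵥ (Q *ᵥ f')) := by
  simp [dotProduct, mulVec, Fintype.sum_prod_type, Fin.sum_univ_two, kroneckerMap_apply]
  ring

lemma form_expand {n : Type*} [Fintype n] [DecidableEq n] (M : Matrix n n ℂ)
    (v w : n → ℂ) (s t : ℂ) :
    star (s • v + t • w) ⬝ᵥ (M *ᵥ (s • v + t • w)) =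
      star s * s * (star v ⬝ᵥ (M *ᵥ v)) + star s * t * (star v ⬝ᵥ (M *ᵥ w)) +
      star t * s * (star w ⬝ᵥ (M *ᵥ v)) + star t * t * (star w ⬝ᵥ (M *ᵥ w)) := by
  simp [mulVec_add, mulVec_smul, star_add, star_smul, add_dotProduct, dotProduct_add,
    smul_dotProduct, dotProduct_smul, smul_eq_mul]
  ring

lemma conj_dot (U : Matrix (Fin 2) (Fin 2) ℂ) (w v : Fin 2 → ℂ) :
    star (star w ⬝ᵥ (U *ᵥ v)) = star v ⬝ᵥ (Uᴴ *ᵥ w) := by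
  rw [← Matrix.star_dotProduct, Matrix.star_mulVec, ← Matrix.dotProduct_mulVec]

open scoped ComplexOrder in
lemma dot_self_re_nonneg {n : Type*} [Fintype n] (v : n → ℂ) : 0 ≤ (star v ⬝ᵥ v).re := by
  have h := dotProduct_star_self_nonneg v
  exact (Complex.le_def.mp h).1

lemma herm_contraction (U : Matrix (Fin 2) (Fin 2) ℂ)
    (hU : U ∈ Matrix.unitaryGroup (Fin 2) ℂ) (w : Fin 2 → ℂ) :
    |(star w ⬝ᵥ (((2:ℂ)⁻¹ • (U + Uᴴ)) *ᵥ w)).re| ≤ (star w ⬝ᵥ w).re := by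
  have hUU : Uᴴ * U = 1 := by
    have := (Unitary.mem_iff.mp hU).1
    rwa [Matrix.star_eq_conjTranspose] at this
  set z := star w ⬝ᵥ (U *ᵥ w) with hz
  have h1 : star w ⬝ᵥ (Uᴴ *ᵥ w) = star z := by rw [← conj_dot]
  have hANorm : (star w ⬝ᵥ (((2:ℂ)⁻¹ • (U + Uᴴ)) *ᵥ w)).re = z.re := by
    have h2 : star w ⬝ᵥ (((2:ℂ)⁻¹ • (U + Uᴴ)) *ᵥ w) = 2⁻¹ * (z + star z) := by
      rw [Matrix.smul_mulVec, dotProduct_smul, Matrix.add_mulVec,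
        dotProduct_add, h1, smul_eq_mul]
    rw [h2, Complex.star_def, Complex.add_conj]
    simp
  rw [hANorm]
  have hnu : star (U *ᵥ w) ⬝ᵥ (U *ᵥ w) = star w ⬝ᵥ w := by
    rw [Matrix.star_mulVec, ← Matrix.dotProduct_mulVec, Matrix.mulVec_mulVec, hUU,
      Matrix.one_mulVec]
  have key : ∀ c : ℂ, c * star c = 1 → 0 ≤ 2 * (star w ⬝ᵥ w).re - 2 * (c * z).re := by
    intro c hc
    have h := dot_self_re_nonneg (w - c • (U *ᵥ w))
    have hexp : star (w - c • (U *ᵥ w)) ⬝ᵥ (w - c • (U *ᵥ w)) =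
        star w ⬝ᵥ w + (c * star c) * (star (U *ᵥ w) ⬝ᵥ (U *ᵥ w))
          - c * (star w ⬝ᵥ (U *ᵥ w)) - star c * (star (U *ᵥ w) ⬝ᵥ w) := by
      simp only [star_sub, star_smul, sub_dotProduct, dotProduct_sub, smul_dotProduct,
        dotProduct_smul, smul_eq_mul]
      ring
    have hcz : star (U *ᵥ w) ⬝ᵥ w = star z := by rw [Matrix.star_dotProduct]
    rw [hexp, hnu, hcz, hc] at h
    have h3 : (star w ⬝ᵥ w + 1 * (star w ⬝ᵥ w) - c * z - star c * star z).re
        = 2 * (star w ⬝ᵥ w).re - 2 * (c * z).re := by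
      have h4 : star c * star z = star (c * z) := by rw [star_mul']
      rw [h4]
      simp [Complex.sub_re, Complex.add_re]
      ring
    rw [h3] at h
    linarith
  have h1 := key 1 (by simp)
  have h2 := key (-1) (by simp)
  simp only [one_mul, neg_one_mul, Complex.neg_re] at h1 h2
  rw [abs_le]
  constructor <;> linarith

lemma psd_form_offdiag (γ δ : ℝ) (u : ℂ)
    (h : ∀ s t : ℂ, 0 ≤ γ * Complex.normSq s + δ * Complex.normSq t
        + 2 * ((starRingEnd ℂ) s * t * u).re) :
    Complex.normSq u ≤ γ * δ := by
  have hγ : 0 ≤ γ := by simpa using h 1 0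
  have hδ : 0 ≤ δ := by simpa using h 0 1
  by_cases hu : u = 0
  · simp [hu]; positivity
  have hn : 0 < Complex.normSq u := Complex.normSq_pos.mpr hu
  rcases eq_or_lt_of_le hγ with hγ0 | hγpos
  · exfalso
    set K : ℝ := δ / (2 * Complex.normSq u) + 1 with hK
    have h2 := h (-(K:ℂ) * u) 1
    have e1 : Complex.normSq (-(K:ℂ) * u) = K^2 * Complex.normSq u := by
      rw [Complex.normSq_mul, Complex.normSq_neg, Complex.normSq_ofReal]; ring
    have e2 : ((starRingEnd ℂ) (-(K:ℂ) * u) * 1 * u).re = -(K * Complex.normSq u) := by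
      rw [_root_.map_mul, map_neg, Complex.conj_ofReal, mul_one]
      have : -(K:ℂ) * (starRingEnd ℂ) u * u = -(K:ℂ) * ((Complex.normSq u : ℝ) : ℂ) := by
        rw [mul_assoc, Complex.normSq_eq_conj_mul_self]
      rw [this]
      simp
    rw [e1, e2, ← hγ0, Complex.normSq_one] at h2
    have hKval : 2 * (K * Complex.normSq u) = δ + 2 * Complex.normSq u := by
      have hdc : δ / (2 * Complex.normSq u) * (2 * Complex.normSq u) = δ :=
        div_mul_cancel₀ δ (mul_pos two_pos hn).ne'
      rw [hK]
      linear_combination hdc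
    linarith
  · have h2 := h (-u) ((γ:ℝ):ℂ)
    have e1 : Complex.normSq (-u) = Complex.normSq u := by simp
    have e2 : ((starRingEnd ℂ) (-u) * (γ:ℂ) * u).re = -(γ * Complex.normSq u) := by
      rw [map_neg]
      have : -(starRingEnd ℂ) u * (γ:ℂ) * u = -(γ:ℂ) * ((Complex.normSq u : ℝ) : ℂ) := by
        rw [show -(starRingEnd ℂ) u * (γ:ℂ) * u = -(γ:ℂ) * ((starRingEnd ℂ) u * u) by ring,
          ← Complex.normSq_eq_conj_mul_self]
      rw [this]
      simp
    rw [e1, e2] at h2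
    have e3 : Complex.normSq ((γ:ℝ):ℂ) = γ^2 := by simp [Complex.normSq_ofReal]; ring
    rw [e3] at h2
    nlinarith

lemma sqrt_aux (a b : ℝ) (ha : |a| ≤ 1) (hb : |b| ≤ 1) :
    Real.sqrt ((1+a)*(1+b)) + Real.sqrt ((1-a)*(1-b)) ≤ 2 := by
  rw [abs_le] at ha hb
  set u := Real.sqrt ((1+a)*(1+b)) with hu
  set v := Real.sqrt ((1-a)*(1-b)) with hv
  have hu0 : 0 ≤ u := Real.sqrt_nonneg _
  have hv0 : 0 ≤ v := Real.sqrt_nonneg _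
  have hu2 : u^2 = (1+a)*(1+b) := Real.sq_sqrt (by nlinarith)
  have hv2 : v^2 = (1-a)*(1-b) := Real.sq_sqrt (by nlinarith)
  have huv : u * v ≤ 1 - a*b := by
    rw [hu, hv, ← Real.sqrt_mul (by nlinarith)]
    calc Real.sqrt ((1+a)*(1+b)*((1-a)*(1-b))) ≤ Real.sqrt ((1-a*b)^2) := by
          apply Real.sqrt_le_sqrt; nlinarith [sq_nonneg (a-b), sq_nonneg (a*b)]
      _ = 1 - a*b := Real.sqrt_sq (by nlinarith)
  nlinarith [sq_nonneg (u+v-2), sq_nonneg (u+v)]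

lemma quad_expand (s₀ s₁ : ℝ) (e₀ e₁ f₀ f₁ : Fin 2 → ℂ)
    (he₀ : star e₀ ⬝ᵥ e₀ = 1) (he₁ : star e₁ ⬝ᵥ e₁ = 1) (he : star e₀ ⬝ᵥ e₁ = 0)
    (hf₀ : star f₀ ⬝ᵥ f₀ = 1) (hf₁ : star f₁ ⬝ᵥ f₁ = 1) (hf : star f₀ ⬝ᵥ f₁ = 0)
    (A B : Matrix (Fin 2) (Fin 2) ℂ) (hA : Aᴴ = A) (hB : Bᴴ = B)
    (ψ : Fin 2 × Fin 2 → ℂ)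
    (hψ : ψ = fun p => (s₀ : ℂ) * e₀ p.1 * f₀ p.2 + (s₁ : ℂ) * e₁ p.1 * f₁ p.2) :
    star ψ ⬝ᵥ ((((2:ℂ)⁻¹ • (1 + A)) ⊗ₖ ((2:ℂ)⁻¹ • (1 + B))) *ᵥ ψ) =
      (((s₀^2*(1+(star e₀ ⬝ᵥ (A *ᵥ e₀)).re)*(1+(star f₀ ⬝ᵥ (B *ᵥ f₀)).re)
        + s₁^2*(1+(star e₁ ⬝ᵥ (A *ᵥ e₁)).re)*(1+(star f₁ ⬝ᵥ (B *ᵥ f₁)).re)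
        + 2*s₀*s₁*((star e₀ ⬝ᵥ (A *ᵥ e₁)) * (star f₀ ⬝ᵥ (B *ᵥ f₁))).re)/4 : ℝ) : ℂ) := by
  have hψ' : ψ = (s₀:ℂ) • (fun p : Fin 2 × Fin 2 => e₀ p.1 * f₀ p.2)
      + (s₁:ℂ) • (fun p : Fin 2 × Fin 2 => e₁ p.1 * f₁ p.2) := by
    rw [hψ]; funext p; simp only [Pi.add_apply, Pi.smul_apply, smul_eq_mul]; ring
  rw [hψ', form_expand, kron_dot, kron_dot, kron_dot, kron_dot]
  have hc : ∀ (x y : Fin 2 → ℂ) (M : Matrix (Fin 2) (Fin 2) ℂ),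
      star x ⬝ᵥ (((2:ℂ)⁻¹ • (1 + M)) *ᵥ y)
        = 2⁻¹ * (star x ⬝ᵥ y + star x ⬝ᵥ (M *ᵥ y)) := by
    intro x y M
    rw [Matrix.smul_mulVec, dotProduct_smul, Matrix.add_mulVec,
      Matrix.one_mulVec, dotProduct_add, smul_eq_mul]
  simp only [hc]
  have he' : star e₁ ⬝ᵥ e₀ = 0 := by rw [Matrix.star_dotProduct, he, star_zero]
  have hf' : star f₁ ⬝ᵥ f₀ = 0 := by rw [Matrix.star_dotProduct, hf, star_zero]
  rw [he₀, he₁, he, he', hf₀, hf₁, hf, hf']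
  have h10e : star e₁ ⬝ᵥ (A *ᵥ e₀) = (starRingEnd ℂ) (star e₀ ⬝ᵥ (A *ᵥ e₁)) := by
    have h := conj_dot A e₀ e₁
    rw [hA] at h
    exact h.symm
  have h10f : star f₁ ⬝ᵥ (B *ᵥ f₀) = (starRingEnd ℂ) (star f₀ ⬝ᵥ (B *ᵥ f₁)) := by
    have h := conj_dot B f₀ f₁
    rw [hB] at h
    exact h.symm
  have hdiag : ∀ (M : Matrix (Fin 2) (Fin 2) ℂ), Mᴴ = M → ∀ x : Fin 2 → ℂ,
      star x ⬝ᵥ (M *ᵥ x) = (((star x ⬝ᵥ (M *ᵥ x)).re : ℝ) : ℂ) := by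
    intro M hM x
    have : (starRingEnd ℂ) (star x ⬝ᵥ (M *ᵥ x)) = star x ⬝ᵥ (M *ᵥ x) := by
      rw [show (starRingEnd ℂ) (star x ⬝ᵥ (M *ᵥ x)) = star (star x ⬝ᵥ (M *ᵥ x)) from rfl,
        conj_dot, hM]
    exact (Complex.conj_eq_iff_re.mp this).symm
  rw [h10e, h10f, hdiag A hA e₀, hdiag A hA e₁, hdiag B hB f₀, hdiag B hB f₁]
  have hr : ((((star e₀ ⬝ᵥ (A *ᵥ e₁)) * (star f₀ ⬝ᵥ (B *ᵥ f₁))).re : ℝ) : ℂ)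
      = ((star e₀ ⬝ᵥ (A *ᵥ e₁)) * (star f₀ ⬝ᵥ (B *ᵥ f₁))
        + (starRingEnd ℂ) (star e₀ ⬝ᵥ (A *ᵥ e₁)) * (starRingEnd ℂ) (star f₀ ⬝ᵥ (B *ᵥ f₁)))/2 := by
    rw [← _root_.map_mul, Complex.add_conj]
    push_cast
    ring
  simp only [Complex.ofReal_re]
  push_cast
  simp only [Complex.star_def, Complex.conj_ofReal]
  linear_combination (-((s₀:ℂ) * (s₁:ℂ)) / 2) * hr

lemma orth_dot (e₀ e₁ : Fin 2 → ℂ) (he₀ : star e₀ ⬝ᵥ e₀ = 1) (he₁ : star e₁ ⬝ᵥ e₁ = 1)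
    (he : star e₀ ⬝ᵥ e₁ = 0) (s t : ℂ) :
    (star (s • e₀ + t • e₁) ⬝ᵥ (s • e₀ + t • e₁)).re
      = Complex.normSq s + Complex.normSq t := by
  have h : star (s • e₀ + t • e₁) ⬝ᵥ (s • e₀ + t • e₁)
      = star (s • e₀ + t • e₁) ⬝ᵥ ((1 : Matrix (Fin 2) (Fin 2) ℂ) *ᵥ (s • e₀ + t • e₁)) := by
    rw [Matrix.one_mulVec]
  rw [h, form_expand]
  simp only [Matrix.one_mulVec]
  have he' : star e₁ ⬝ᵥ e₀ = 0 := by rw [Matrix.star_dotProduct, he, star_zero]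
  rw [he₀, he₁, he, he']
  simp only [mul_zero, mul_one, add_zero, Complex.star_def]
  rw [← Complex.normSq_eq_conj_mul_self, ← Complex.normSq_eq_conj_mul_self]
  push_cast
  simp

lemma herm_form (A : Matrix (Fin 2) (Fin 2) ℂ) (hA : Aᴴ = A) (e₀ e₁ : Fin 2 → ℂ) (s t : ℂ) :
    (star (s • e₀ + t • e₁) ⬝ᵥ (A *ᵥ (s • e₀ + t • e₁))).re
      = Complex.normSq s * (star e₀ ⬝ᵥ (A *ᵥ e₀)).re
        + Complex.normSq t * (star e₁ ⬝ᵥ (A *ᵥ e₁)).re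
        + 2 * ((starRingEnd ℂ) s * t * (star e₀ ⬝ᵥ (A *ᵥ e₁))).re := by
  have h10 : star e₁ ⬝ᵥ (A *ᵥ e₀) = (starRingEnd ℂ) (star e₀ ⬝ᵥ (A *ᵥ e₁)) := by
    have h := conj_dot A e₀ e₁
    rw [hA] at h
    exact h.symm
  have hdiag : ∀ x : Fin 2 → ℂ,
      star x ⬝ᵥ (A *ᵥ x) = (((star x ⬝ᵥ (A *ᵥ x)).re : ℝ) : ℂ) := by
    intro x
    have : (starRingEnd ℂ) (star x ⬝ᵥ (A *ᵥ x)) = star x ⬝ᵥ (A *ᵥ x) := by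
      rw [show (starRingEnd ℂ) (star x ⬝ᵥ (A *ᵥ x)) = star (star x ⬝ᵥ (A *ᵥ x)) from rfl,
        conj_dot, hA]
    exact (Complex.conj_eq_iff_re.mp this).symm
  have key : star (s • e₀ + t • e₁) ⬝ᵥ (A *ᵥ (s • e₀ + t • e₁))
      = ((Complex.normSq s * (star e₀ ⬝ᵥ (A *ᵥ e₀)).re
        + Complex.normSq t * (star e₁ ⬝ᵥ (A *ᵥ e₁)).re
        + 2 * ((starRingEnd ℂ) s * t * (star e₀ ⬝ᵥ (A *ᵥ e₁))).re : ℝ) : ℂ) := by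
    rw [form_expand, h10]
    rw [hdiag e₀, hdiag e₁]
    simp only [Complex.ofReal_re]
    have hz := Complex.add_conj ((starRingEnd ℂ) s * t * (star e₀ ⬝ᵥ (A *ᵥ e₁)))
    simp only [_root_.map_mul, Complex.conj_conj] at hz
    have hs := Complex.normSq_eq_conj_mul_self (z := s)
    have ht := Complex.normSq_eq_conj_mul_self (z := t)
    push_cast at hz ⊢
    simp only [Complex.star_def]
    linear_combination hz - ((star e₀ ⬝ᵥ (A *ᵥ e₀)).re : ℂ) * hs
      - ((star e₁ ⬝ᵥ (A *ᵥ e₁)).re : ℂ) * ht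
  rw [key, Complex.ofReal_re]

lemma bd_eq (s₀ s₁ : ℝ) (e₀ e₁ f₀ f₁ : Fin 2 → ℂ)
    (he₀ : star e₀ ⬝ᵥ e₀ = 1) (he₁ : star e₁ ⬝ᵥ e₁ = 1) (he : star e₀ ⬝ᵥ e₁ = 0)
    (hf₀ : star f₀ ⬝ᵥ f₀ = 1) (hf₁ : star f₁ ⬝ᵥ f₁ = 1) (hf : star f₀ ⬝ᵥ f₁ = 0)
    (U V : Matrix (Fin 2) (Fin 2) ℂ)
    (ψ : Fin 2 × Fin 2 → ℂ)
    (hψ : ψ = fun p => (s₀ : ℂ) * e₀ p.1 * f₀ p.2 + (s₁ : ℂ) * e₁ p.1 * f₁ p.2) :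
    bdWinProb ψ U V = (1/2) * (Real.sqrt
        ((s₀^2*(1+(star e₀ ⬝ᵥ (((2:ℂ)⁻¹ • (U + Uᴴ)) *ᵥ e₀)).re)*(1+(star f₀ ⬝ᵥ (((2:ℂ)⁻¹ • (V + Vᴴ)) *ᵥ f₀)).re)
        + s₁^2*(1+(star e₁ ⬝ᵥ (((2:ℂ)⁻¹ • (U + Uᴴ)) *ᵥ e₁)).re)*(1+(star f₁ ⬝ᵥ (((2:ℂ)⁻¹ • (V + Vᴴ)) *ᵥ f₁)).re)
        + 2*s₀*s₁*((star e₀ ⬝ᵥ (((2:ℂ)⁻¹ • (U + Uᴴ)) *ᵥ e₁)) * (star f₀ ⬝ᵥ (((2:ℂ)⁻¹ • (V + Vᴴ)) *ᵥ f₁))).re)/4)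
      + Real.sqrt
        ((s₀^2*(1-(star e₀ ⬝ᵥ (((2:ℂ)⁻¹ • (U + Uᴴ)) *ᵥ e₀)).re)*(1-(star f₀ ⬝ᵥ (((2:ℂ)⁻¹ • (V + Vᴴ)) *ᵥ f₀)).re)
        + s₁^2*(1-(star e₁ ⬝ᵥ (((2:ℂ)⁻¹ • (U + Uᴴ)) *ᵥ e₁)).re)*(1-(star f₁ ⬝ᵥ (((2:ℂ)⁻¹ • (V + Vᴴ)) *ᵥ f₁)).re)
        + 2*s₀*s₁*((star e₀ ⬝ᵥ (((2:ℂ)⁻¹ • (U + Uᴴ)) *ᵥ e₁)) * (star f₀ ⬝ᵥ (((2:ℂ)⁻¹ • (V + Vᴴ)) *ᵥ f₁))).re)/4))^2 := by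
  have hherm : ∀ W : Matrix (Fin 2) (Fin 2) ℂ, ((2:ℂ)⁻¹ • (W + Wᴴ))ᴴ = (2:ℂ)⁻¹ • (W + Wᴴ) := by
    intro W
    rw [Matrix.conjTranspose_smul, Matrix.conjTranspose_add, Matrix.conjTranspose_conjTranspose]
    rw [show star ((2:ℂ)⁻¹) = (2:ℂ)⁻¹ by simp, add_comm]
  have hmherm : ∀ W : Matrix (Fin 2) (Fin 2) ℂ,
      (-((2:ℂ)⁻¹ • (W + Wᴴ)))ᴴ = -((2:ℂ)⁻¹ • (W + Wᴴ)) := by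
    intro W; rw [Matrix.conjTranspose_neg, hherm]
  have hPk : ∀ (P Q : Matrix (Fin 2) (Fin 2) ℂ),
      (P ⊗ₖ (1 : Matrix (Fin 2) (Fin 2) ℂ)) * ((1 : Matrix (Fin 2) (Fin 2) ℂ) ⊗ₖ Q)
        = P ⊗ₖ Q := by
    intro P Q
    rw [← Matrix.mul_kronecker_mul, Matrix.mul_one, Matrix.one_mul]
  simp only [bdWinProb]
  rw [hPk, hPk, sub_eq_add_neg, sub_eq_add_neg]
  rw [quad_expand s₀ s₁ e₀ e₁ f₀ f₁ he₀ he₁ he hf₀ hf₁ hf _ _ (hherm U) (hherm V) ψ hψ,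
    quad_expand s₀ s₁ e₀ e₁ f₀ f₁ he₀ he₁ he hf₀ hf₁ hf _ _ (hmherm U) (hmherm V) ψ hψ,
    Complex.ofReal_re, Complex.ofReal_re]
  simp only [Matrix.neg_mulVec, dotProduct_neg, Complex.neg_re, neg_mul_neg,
    mul_neg, neg_neg]
  congr 1
  congr 1
  congr 1 <;> · congr 1
                simp only [Matrix.neg_mulVec, dotProduct_neg, neg_mul, mul_neg,
                  neg_neg, Complex.neg_re]
                ring

lemma herm_of (W : Matrix (Fin 2) (Fin 2) ℂ) :
    ((2:ℂ)⁻¹ • (W + Wᴴ))ᴴ = (2:ℂ)⁻¹ • (W + Wᴴ) := by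
  rw [Matrix.conjTranspose_smul, Matrix.conjTranspose_add, Matrix.conjTranspose_conjTranspose]
  rw [show star ((2:ℂ)⁻¹) = (2:ℂ)⁻¹ by simp, add_comm]

set_option maxHeartbeats 2000000 in
lemma bd_ub (lam₀ lam₁ : ℝ) (h0 : 0 ≤ lam₀) (h1 : 0 ≤ lam₁) (hsum : lam₀ + lam₁ = 1)
    (e₀ e₁ f₀ f₁ : Fin 2 → ℂ)
    (he₀ : star e₀ ⬝ᵥ e₀ = 1) (he₁ : star e₁ ⬝ᵥ e₁ = 1) (he : star e₀ ⬝ᵥ e₁ = 0)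
    (hf₀ : star f₀ ⬝ᵥ f₀ = 1) (hf₁ : star f₁ ⬝ᵥ f₁ = 1) (hf : star f₀ ⬝ᵥ f₁ = 0)
    (ψ : Fin 2 × Fin 2 → ℂ)
    (hψ : ψ = fun p => (Real.sqrt lam₀ : ℂ) * e₀ p.1 * f₀ p.2 +
                       (Real.sqrt lam₁ : ℂ) * e₁ p.1 * f₁ p.2)
    (U V : Matrix (Fin 2) (Fin 2) ℂ)
    (hU : U ∈ Matrix.unitaryGroup (Fin 2) ℂ) (hV : V ∈ Matrix.unitaryGroup (Fin 2) ℂ) :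
    bdWinProb ψ U V ≤ (1/2) * (1 + 2 * Real.sqrt (lam₀ * lam₁)) := by
  rw [bd_eq (Real.sqrt lam₀) (Real.sqrt lam₁) e₀ e₁ f₀ f₁ he₀ he₁ he hf₀ hf₁ hf U V ψ hψ]
  set s₀ := Real.sqrt lam₀ with hs₀def
  set s₁ := Real.sqrt lam₁ with hs₁def
  have hs₀ : 0 ≤ s₀ := Real.sqrt_nonneg _
  have hs₁ : 0 ≤ s₁ := Real.sqrt_nonneg _
  set A := (2:ℂ)⁻¹ • (U + Uᴴ) with hAdef
  set B := (2:ℂ)⁻¹ • (V + Vᴴ) with hBdef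
  set α := (star e₀ ⬝ᵥ (A *ᵥ e₀)).re with hα
  set α' := (star e₁ ⬝ᵥ (A *ᵥ e₁)).re with hα'
  set β := (star f₀ ⬝ᵥ (B *ᵥ f₀)).re with hβ
  set β' := (star f₁ ⬝ᵥ (B *ᵥ f₁)).re with hβ'
  set a01 := star e₀ ⬝ᵥ (A *ᵥ e₁) with ha01
  set b01 := star f₀ ⬝ᵥ (B *ᵥ f₁) with hb01
  set r := (a01 * b01).re with hrdef
  -- diagonal bounds
  have habs : ∀ (x : Fin 2 → ℂ), star x ⬝ᵥ x = 1 →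
      |(star x ⬝ᵥ (A *ᵥ x)).re| ≤ 1 := by
    intro x hx
    have h := herm_contraction U hU x
    rw [hx, ← hAdef] at h
    simpa only [Complex.one_re] using h
  have habsB : ∀ (x : Fin 2 → ℂ), star x ⬝ᵥ x = 1 →
      |(star x ⬝ᵥ (B *ᵥ x)).re| ≤ 1 := by
    intro x hx
    have h := herm_contraction V hV x
    rw [hx, ← hBdef] at h
    simpa only [Complex.one_re] using h
  have hαb : |α| ≤ 1 := habs e₀ he₀
  have hα'b : |α'| ≤ 1 := habs e₁ he₁
  have hβb : |β| ≤ 1 := habsB f₀ hf₀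
  have hβ'b : |β'| ≤ 1 := habsB f₁ hf₁
  have hα1 := abs_le.mp hαb
  have hα'1 := abs_le.mp hα'b
  have hβ1 := abs_le.mp hβb
  have hβ'1 := abs_le.mp hβ'b
  -- off-diagonal bounds
  have hforms : ∀ s t : ℂ, |Complex.normSq s * α + Complex.normSq t * α'
      + 2 * ((starRingEnd ℂ) s * t * a01).re| ≤ Complex.normSq s + Complex.normSq t := by
    intro s t
    have h := herm_contraction U hU (s • e₀ + t • e₁)
    rw [show (2:ℂ)⁻¹ • (U + Uᴴ) = A from rfl] at h
    rw [herm_form A (herm_of U) e₀ e₁ s t, orth_dot e₀ e₁ he₀ he₁ he s t] at h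
    exact h
  have hformsB : ∀ s t : ℂ, |Complex.normSq s * β + Complex.normSq t * β'
      + 2 * ((starRingEnd ℂ) s * t * b01).re| ≤ Complex.normSq s + Complex.normSq t := by
    intro s t
    have h := herm_contraction V hV (s • f₀ + t • f₁)
    rw [show (2:ℂ)⁻¹ • (V + Vᴴ) = B from rfl] at h
    rw [herm_form B (herm_of V) f₀ f₁ s t, orth_dot f₀ f₁ hf₀ hf₁ hf s t] at h
    exact h
  have hnap : Complex.normSq a01 ≤ (1+α)*(1+α') := by
    apply psd_form_offdiag
    intro s t
    have h := (abs_le.mp (hforms s t)).1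
    linarith [h]
  have hnam : Complex.normSq a01 ≤ (1-α)*(1-α') := by
    have := psd_form_offdiag (1-α) (1-α') (-a01) (by
      intro s t
      have h := (abs_le.mp (hforms s t)).2
      simp only [mul_neg, Complex.neg_re]
      linarith [h])
    simpa [Complex.normSq_neg] using this
  have hnbp : Complex.normSq b01 ≤ (1+β)*(1+β') := by
    apply psd_form_offdiag
    intro s t
    have h := (abs_le.mp (hformsB s t)).1
    linarith [h]
  have hnbm : Complex.normSq b01 ≤ (1-β)*(1-β') := by
    have := psd_form_offdiag (1-β) (1-β') (-b01) (by
      intro s t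
      have h := (abs_le.mp (hformsB s t)).2
      simp only [mul_neg, Complex.neg_re]
      linarith [h])
    simpa [Complex.normSq_neg] using this
  -- cross-term bound
  have hr_bound : ∀ ga gb : ℝ, Complex.normSq a01 ≤ ga → Complex.normSq b01 ≤ gb →
      r ≤ Real.sqrt ga * Real.sqrt gb := by
    intro ga gb hga hgb
    calc r ≤ ‖a01 * b01‖ := Complex.re_le_norm _
      _ = ‖a01‖ * ‖b01‖ := norm_mul _ _
      _ ≤ Real.sqrt ga * Real.sqrt gb := by
          apply mul_le_mul
          · rw [Complex.norm_def]; exact Real.sqrt_le_sqrt hga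
          · rw [Complex.norm_def]; exact Real.sqrt_le_sqrt hgb
          · exact norm_nonneg _
          · exact Real.sqrt_nonneg _
  set x := Real.sqrt ((1+α)*(1+β)) with hx
  set y := Real.sqrt ((1+α')*(1+β')) with hy
  set x' := Real.sqrt ((1-α)*(1-β)) with hx'
  set y' := Real.sqrt ((1-α')*(1-β')) with hy'
  have hrp : r ≤ x * y := by
    have h := hr_bound ((1+α)*(1+α')) ((1+β)*(1+β')) hnap hnbp
    have e1 : Real.sqrt ((1+α)*(1+α')) * Real.sqrt ((1+β)*(1+β')) = x * y := by
      rw [hx, hy, ← Real.sqrt_mul (mul_nonneg (by linarith) (by linarith)),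
        ← Real.sqrt_mul (mul_nonneg (by linarith) (by linarith))]
      congr 1
      ring
    rwa [e1] at h
  have hrm : r ≤ x' * y' := by
    have h := hr_bound ((1-α)*(1-α')) ((1-β)*(1-β')) hnam hnbm
    have e1 : Real.sqrt ((1-α)*(1-α')) * Real.sqrt ((1-β)*(1-β')) = x' * y' := by
      rw [hx', hy', ← Real.sqrt_mul (mul_nonneg (by linarith) (by linarith)),
        ← Real.sqrt_mul (mul_nonneg (by linarith) (by linarith))]
      congr 1
      ring
    rwa [e1] at h
  have hx0 : 0 ≤ x := Real.sqrt_nonneg _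
  have hy0 : 0 ≤ y := Real.sqrt_nonneg _
  have hx'0 : 0 ≤ x' := Real.sqrt_nonneg _
  have hy'0 : 0 ≤ y' := Real.sqrt_nonneg _
  have hx2 : x^2 = (1+α)*(1+β) := Real.sq_sqrt (mul_nonneg (by linarith) (by linarith))
  have hy2 : y^2 = (1+α')*(1+β') := Real.sq_sqrt (mul_nonneg (by linarith) (by linarith))
  have hx'2 : x'^2 = (1-α)*(1-β) := Real.sq_sqrt (mul_nonneg (by linarith) (by linarith))
  have hy'2 : y'^2 = (1-α')*(1-β') := Real.sq_sqrt (mul_nonneg (by linarith) (by linarith))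
  -- bound each sqrt
  have hEp : Real.sqrt ((s₀^2*(1+α)*(1+β) + s₁^2*(1+α')*(1+β') + 2*s₀*s₁*r)/4)
      ≤ (s₀*x + s₁*y)/2 := by
    have harg : (s₀^2*(1+α)*(1+β) + s₁^2*(1+α')*(1+β') + 2*s₀*s₁*r)/4
        ≤ ((s₀*x + s₁*y)/2)^2 := by
      have hcross : s₀*s₁*r ≤ s₀*s₁*(x*y) :=
        mul_le_mul_of_nonneg_left hrp (mul_nonneg hs₀ hs₁)
      have hexpand : ((s₀*x + s₁*y)/2)^2
          = (s₀^2*(x^2) + 2*(s₀*s₁*(x*y)) + s₁^2*(y^2))/4 := by ring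
      rw [hexpand, hx2, hy2]
      linarith [hcross]
    calc Real.sqrt _ ≤ Real.sqrt (((s₀*x + s₁*y)/2)^2) := Real.sqrt_le_sqrt harg
      _ = (s₀*x + s₁*y)/2 := Real.sqrt_sq (by positivity)
  have hEm : Real.sqrt ((s₀^2*(1-α)*(1-β) + s₁^2*(1-α')*(1-β') + 2*s₀*s₁*r)/4)
      ≤ (s₀*x' + s₁*y')/2 := by
    have harg : (s₀^2*(1-α)*(1-β) + s₁^2*(1-α')*(1-β') + 2*s₀*s₁*r)/4
        ≤ ((s₀*x' + s₁*y')/2)^2 := by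
      have hcross : s₀*s₁*r ≤ s₀*s₁*(x'*y') :=
        mul_le_mul_of_nonneg_left hrm (mul_nonneg hs₀ hs₁)
      have hexpand : ((s₀*x' + s₁*y')/2)^2
          = (s₀^2*(x'^2) + 2*(s₀*s₁*(x'*y')) + s₁^2*(y'^2))/4 := by ring
      rw [hexpand, hx'2, hy'2]
      linarith [hcross]
    calc Real.sqrt _ ≤ Real.sqrt (((s₀*x' + s₁*y')/2)^2) := Real.sqrt_le_sqrt harg
      _ = (s₀*x' + s₁*y')/2 := Real.sqrt_sq (by positivity)
  have hxx : x + x' ≤ 2 := sqrt_aux α β hαb hβb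
  have hyy : y + y' ≤ 2 := sqrt_aux α' β' hα'b hβ'b
  have hsum2 : Real.sqrt ((s₀^2*(1+α)*(1+β) + s₁^2*(1+α')*(1+β') + 2*s₀*s₁*r)/4)
      + Real.sqrt ((s₀^2*(1-α)*(1-β) + s₁^2*(1-α')*(1-β') + 2*s₀*s₁*r)/4)
      ≤ s₀ + s₁ := by
    have h1 : s₀*(x+x') ≤ s₀*2 := mul_le_mul_of_nonneg_left hxx hs₀
    have h2 : s₁*(y+y') ≤ s₁*2 := mul_le_mul_of_nonneg_left hyy hs₁
    linarith [hEp, hEm, h1, h2]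
  have hnn : 0 ≤ Real.sqrt ((s₀^2*(1+α)*(1+β) + s₁^2*(1+α')*(1+β') + 2*s₀*s₁*r)/4)
      + Real.sqrt ((s₀^2*(1-α)*(1-β) + s₁^2*(1-α')*(1-β') + 2*s₀*s₁*r)/4) := by
    positivity
  have hpow := pow_le_pow_left₀ hnn hsum2 2
  have hfin : (s₀ + s₁)^2 = 1 + 2*Real.sqrt (lam₀*lam₁) := by
    have hmul : s₀ * s₁ = Real.sqrt (lam₀*lam₁) := (Real.sqrt_mul h0 lam₁).symm
    rw [add_sq, Real.sq_sqrt h0, Real.sq_sqrt h1, mul_assoc, hmul]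
    linarith
  rw [← hfin]
  linarith [hpow]

lemma flip_unitary (e₀ e₁ : Fin 2 → ℂ)
    (he₀ : star e₀ ⬝ᵥ e₀ = 1) (he₁ : star e₁ ⬝ᵥ e₁ = 1) (he : star e₀ ⬝ᵥ e₁ = 0) :
    ∃ U ∈ Matrix.unitaryGroup (Fin 2) ℂ, Uᴴ = U ∧ U *ᵥ e₀ = e₁ ∧ U *ᵥ e₁ = e₀ := by
  have he' : star e₁ ⬝ᵥ e₀ = 0 := by rw [Matrix.star_dotProduct, he, star_zero]
  have he₀' : star (e₀ 0) * e₀ 0 + star (e₀ 1) * e₀ 1 = 1 := by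
    simpa [dotProduct, Fin.sum_univ_two] using he₀
  have he₁' : star (e₁ 0) * e₁ 0 + star (e₁ 1) * e₁ 1 = 1 := by
    simpa [dotProduct, Fin.sum_univ_two] using he₁
  have hee : star (e₀ 0) * e₁ 0 + star (e₀ 1) * e₁ 1 = 0 := by
    simpa [dotProduct, Fin.sum_univ_two] using he
  have hee' : star (e₁ 0) * e₀ 0 + star (e₁ 1) * e₀ 1 = 0 := by
    simpa [dotProduct, Fin.sum_univ_two] using he'
  set E : Matrix (Fin 2) (Fin 2) ℂ := Matrix.of fun i j => if j = 0 then e₀ i else e₁ i with hE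
  have hEE : Eᴴ * E = 1 := by
    ext i j
    fin_cases i <;> fin_cases j <;>
      simp [Matrix.mul_apply, Matrix.conjTranspose_apply, Fin.sum_univ_two, hE,
        Matrix.one_apply] <;>
      first
        | exact he₀'
        | exact he₁'
        | exact hee
        | exact hee'
  have hEU : E ∈ Matrix.unitaryGroup (Fin 2) ℂ := by
    rw [Matrix.mem_unitaryGroup_iff', Matrix.star_eq_conjTranspose]
    exact hEE
  set X : Matrix (Fin 2) (Fin 2) ℂ := !![0,1;1,0] with hX
  have hXh : Xᴴ = X := by
    ext i j
    fin_cases i <;> fin_cases j <;> simp [hX, Matrix.conjTranspose_apply]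
  have hXU : X ∈ Matrix.unitaryGroup (Fin 2) ℂ := by
    rw [Matrix.mem_unitaryGroup_iff', Matrix.star_eq_conjTranspose, hXh]
    ext i j
    fin_cases i <;> fin_cases j <;>
      simp [hX, Matrix.mul_apply, Fin.sum_univ_two, Matrix.one_apply]
  have h1 : Eᴴ *ᵥ e₀ = ![1, 0] := by
    funext i
    fin_cases i <;>
      simp [Matrix.mulVec, dotProduct, Matrix.conjTranspose_apply, Fin.sum_univ_two, hE]
    · exact he₀'
    · exact hee'
  have h1' : Eᴴ *ᵥ e₁ = ![0, 1] := by
    funext i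
    fin_cases i <;>
      simp [Matrix.mulVec, dotProduct, Matrix.conjTranspose_apply, Fin.sum_univ_two, hE]
    · exact hee
    · exact he₁'
  have h2 : X *ᵥ ![1, 0] = ![0, 1] := by
    funext i
    fin_cases i <;> simp [hX, Matrix.mulVec, dotProduct, Fin.sum_univ_two]
  have h2' : X *ᵥ ![0, 1] = ![1, 0] := by
    funext i
    fin_cases i <;> simp [hX, Matrix.mulVec, dotProduct, Fin.sum_univ_two]
  have h3 : E *ᵥ ![0, 1] = e₁ := by
    funext i
    simp [hE, Matrix.mulVec, dotProduct, Fin.sum_univ_two]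
  have h3' : E *ᵥ ![1, 0] = e₀ := by
    funext i
    simp [hE, Matrix.mulVec, dotProduct, Fin.sum_univ_two]
  refine ⟨E * X * Eᴴ, ?_, ?_, ?_, ?_⟩
  · rw [show Eᴴ = star E from (Matrix.star_eq_conjTranspose E).symm]
    exact mul_mem (mul_mem hEU hXU) (Unitary.star_mem hEU)
  · rw [Matrix.conjTranspose_mul, Matrix.conjTranspose_mul,
      Matrix.conjTranspose_conjTranspose, hXh, ← Matrix.mul_assoc]
  · rw [← Matrix.mulVec_mulVec, ← Matrix.mulVec_mulVec, h1, h2, h3]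
  · rw [← Matrix.mulVec_mulVec, ← Matrix.mulVec_mulVec, h1', h2', h3']

lemma bd_witness (lam₀ lam₁ : ℝ) (h0 : 0 ≤ lam₀) (h1 : 0 ≤ lam₁) (hsum : lam₀ + lam₁ = 1)
    (e₀ e₁ f₀ f₁ : Fin 2 → ℂ)
    (he₀ : star e₀ ⬝ᵥ e₀ = 1) (he₁ : star e₁ ⬝ᵥ e₁ = 1) (he : star e₀ ⬝ᵥ e₁ = 0)
    (hf₀ : star f₀ ⬝ᵥ f₀ = 1) (hf₁ : star f₁ ⬝ᵥ f₁ = 1) (hf : star f₀ ⬝ᵥ f₁ = 0)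
    (ψ : Fin 2 × Fin 2 → ℂ)
    (hψ : ψ = fun p => (Real.sqrt lam₀ : ℂ) * e₀ p.1 * f₀ p.2 +
                       (Real.sqrt lam₁ : ℂ) * e₁ p.1 * f₁ p.2) :
    ∃ U ∈ Matrix.unitaryGroup (Fin 2) ℂ, ∃ V ∈ Matrix.unitaryGroup (Fin 2) ℂ,
      (1/2) * (1 + 2 * Real.sqrt (lam₀ * lam₁)) = bdWinProb ψ U V := by
  obtain ⟨U, hUU, hUh, hUe₀, hUe₁⟩ := flip_unitary e₀ e₁ he₀ he₁ he
  obtain ⟨V, hVU, hVh, hVf₀, hVf₁⟩ := flip_unitary f₀ f₁ hf₀ hf₁ hf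
  refine ⟨U, hUU, V, hVU, ?_⟩
  rw [bd_eq (Real.sqrt lam₀) (Real.sqrt lam₁) e₀ e₁ f₀ f₁ he₀ he₁ he hf₀ hf₁ hf U V ψ hψ]
  have he' : star e₁ ⬝ᵥ e₀ = 0 := by rw [Matrix.star_dotProduct, he, star_zero]
  have hf' : star f₁ ⬝ᵥ f₀ = 0 := by rw [Matrix.star_dotProduct, hf, star_zero]
  have hA : (2:ℂ)⁻¹ • (U + Uᴴ) = U := by
    rw [hUh]
    ext i j
    simp [Matrix.add_apply, smul_eq_mul]
    ring
  have hB : (2:ℂ)⁻¹ • (V + Vᴴ) = V := by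
    rw [hVh]
    ext i j
    simp [Matrix.add_apply, smul_eq_mul]
    ring
  rw [hA, hB, hUe₀, hUe₁, hVf₀, hVf₁, he, he', he₀, hf, hf', hf₀]
  simp only [Complex.zero_re, Complex.one_re, one_mul]
  set s₀ := Real.sqrt lam₀ with hs₀def
  set s₁ := Real.sqrt lam₁ with hs₁def
  have hs₀ : 0 ≤ s₀ := Real.sqrt_nonneg _
  have hs₁ : 0 ≤ s₁ := Real.sqrt_nonneg _
  have harg1 : (s₀^2*(1+0)*(1+0) + s₁^2*(1+0)*(1+0) + 2*s₀*s₁*1)/4 = ((s₀+s₁)/2)^2 := by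
    ring
  have harg2 : (s₀^2*(1-0)*(1-0) + s₁^2*(1-0)*(1-0) + 2*s₀*s₁*1)/4 = ((s₀+s₁)/2)^2 := by
    ring
  rw [harg1, harg2, Real.sqrt_sq (by positivity)]
  have hmul : s₀ * s₁ = Real.sqrt (lam₀*lam₁) := (Real.sqrt_mul h0 lam₁).symm
  have h2 : ((s₀+s₁)/2 + (s₀+s₁)/2)^2 = (s₀+s₁)^2 := by ring
  rw [h2, add_sq, Real.sq_sqrt h0, Real.sq_sqrt h1, mul_assoc, hmul]
  linarith

/-- The maximum BD-game win probability for a pure two-qubit state with Schmidt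
coefficients λ₀, λ₁ equals ½(1 + 2√(λ₀λ₁)) = ½(1 + C(|ψ⟩)). -/
theorem stmt_16 (lam₀ lam₁ : ℝ) (h0 : 0 ≤ lam₀) (h1 : 0 ≤ lam₁) (hsum : lam₀ + lam₁ = 1)
    (e₀ e₁ f₀ f₁ : Fin 2 → ℂ)
    (he₀ : star e₀ ⬝ᵥ e₀ = 1) (he₁ : star e₁ ⬝ᵥ e₁ = 1) (he : star e₀ ⬝ᵥ e₁ = 0)
    (hf₀ : star f₀ ⬝ᵥ f₀ = 1) (hf₁ : star f₁ ⬝ᵥ f₁ = 1) (hf : star f₀ ⬝ᵥ f₁ = 0)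
    (ψ : Fin 2 × Fin 2 → ℂ)
    (hψ : ψ = fun p => (Real.sqrt lam₀ : ℂ) * e₀ p.1 * f₀ p.2 +
                       (Real.sqrt lam₁ : ℂ) * e₁ p.1 * f₁ p.2) :
    IsGreatest { x : ℝ | ∃ U ∈ Matrix.unitaryGroup (Fin 2) ℂ,
        ∃ V ∈ Matrix.unitaryGroup (Fin 2) ℂ, x = bdWinProb ψ U V }
      ((1/2) * (1 + 2 * Real.sqrt (lam₀ * lam₁))) := by
  constructor
  · exact bd_witness lam₀ lam₁ h0 h1 hsum e₀ e₁ f₀ f₁ he₀ he₁ he hf₀ hf₁ hf ψ hψ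
  · rintro x ⟨U, hU, V, hV, rfl⟩
    exact bd_ub lam₀ lam₁ h0 h1 hsum e₀ e₁ f₀ f₁ he₀ he₁ he hf₀ hf₁ hf ψ hψ U V hU hV
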